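/- Let x = αm + is with 0 ≤ i ≤ m−1. The arithmetical Leamer monoid S_{m,k}^s has a finite column at x if and only if kα ≤ m−2 and 0 ≤ i ≤ kα−1, in which case the column at x has height kα − i; and S_{m,k}^s has an infinite column at x if and only if kα ≥ m−1. -/

import Mathlib

/-- The Leamer monoid as a subset of ℕ × ℕ: (0,0) together with all (x,n), n ≥ 1,
such that x + i*s ∈ Γ for all 0 ≤ i ≤ n. -/
def Leamer (Γ : AddSubmonoid ℕ) (s : ℕ) : Set (ℕ × ℕ) :=
  {p | p = (0, 0) ∨ (1 ≤ p.2 ∧ ∀ i ≤ p.2, p.1 + i * s ∈ Γ)}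

/-- An irreducible (atom) of a subset S of ℕ × ℕ: a nonzero element of S that is not the
sum of two nonzero elements of S. -/
def LIrred (S : Set (ℕ × ℕ)) (z : ℕ × ℕ) : Prop :=
  z ∈ S ∧ z ≠ 0 ∧ ∀ a b : ℕ × ℕ, a ∈ S → b ∈ S → a ≠ 0 → b ≠ 0 → z ≠ a + b

/-- A reducible element of S: an element of S that is the sum of two nonzero elements of S. -/
def LReducible (S : Set (ℕ × ℕ)) (z : ℕ × ℕ) : Prop :=
  z ∈ S ∧ ∃ a b : ℕ × ℕ, a ∈ S ∧ b ∈ S ∧ a ≠ 0 ∧ b ≠ 0 ∧ z = a + b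

/-- The set of factorization lengths of z into irreducibles of S. -/
def LSet (S : Set (ℕ × ℕ)) (z : ℕ × ℕ) : Set ℕ :=
  {r | ∃ l : Multiset (ℕ × ℕ), Multiset.card l = r ∧ (∀ a ∈ l, LIrred S a) ∧ l.sum = z}

/-- The Delta set of z: differences of successive factorization lengths. -/
def LDelta (S : Set (ℕ × ℕ)) (z : ℕ × ℕ) : Set ℕ :=
  {d | ∃ a b, a ∈ LSet S z ∧ b ∈ LSet S z ∧ a < b ∧
    (∀ c, a < c → c < b → c ∉ LSet S z) ∧ d = b - a}

/-- The Delta set of the monoid S. -/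
def LDeltaMonoid (S : Set (ℕ × ℕ)) : Set ℕ :=
  {d | ∃ z, z ∈ S ∧ z ≠ 0 ∧ d ∈ LDelta S z}

/-- The Frobenius number of a numerical monoid Γ. -/
noncomputable def Frob (Γ : AddSubmonoid ℕ) : ℕ := sSup {x | x ∉ Γ}

/-- The numerical monoid generated by the arithmetic sequence m, m+s, ..., m+ks. -/
def ArithGamma (m k s : ℕ) : AddSubmonoid ℕ :=
  AddSubmonoid.closure {v | ∃ j ≤ k, v = m + j * s}


lemma arithGamma_mem (m k s n : ℕ) :
    n ∈ ArithGamma m k s ↔ ∃ a b, b ≤ k * a ∧ n = a * m + b * s := by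
  constructor
  · intro h
    induction h using AddSubmonoid.closure_induction with
    | mem v hv => obtain ⟨j, hj, rfl⟩ := hv; exact ⟨1, j, by simpa using hj, by ring⟩
    | zero => exact ⟨0, 0, le_refl _, by simp⟩
    | add u v _ _ hu hv =>
        obtain ⟨a1, b1, h1, rfl⟩ := hu
        obtain ⟨a2, b2, h2, rfl⟩ := hv
        exact ⟨a1 + a2, b1 + b2, by nlinarith, by ring⟩
  · rintro ⟨a, b, hb, rfl⟩
    induction a generalizing b with
    | zero =>
        have : b = 0 := by omega
        subst this; simpa using (AddSubmonoid.zero_mem _)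
    | succ a ih =>
        set j := min b k with hj
        have h1 : m + j * s ∈ ArithGamma m k s :=
          AddSubmonoid.subset_closure ⟨j, min_le_right _ _, rfl⟩
        have hk' : k * (a + 1) = k * a + k := by ring
        have h2 : a * m + (b - j) * s ∈ ArithGamma m k s := ih (b - j) (by omega)
        have hb' : j + (b - j) = b := by omega
        have key : (a + 1) * m + b * s = (m + j * s) + (a * m + (b - j) * s) := by
          calc (a + 1) * m + b * s = (a + 1) * m + (j + (b - j)) * s := by rw [hb']
            _ = (m + j * s) + (a * m + (b - j) * s) := by ring
        rw [key]; exact AddSubmonoid.add_mem _ h1 h2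

lemma arithGamma_mem_iff (m k s : ℕ) (hm : 2 ≤ m) (hgcd : Nat.gcd m s = 1) (α t : ℕ) :
    α * m + t * s ∈ ArithGamma m k s ↔ t % m ≤ k * (α + t / m * s) := by
  rw [arithGamma_mem]
  constructor
  · rintro ⟨a, b, hb, heq⟩
    have hsne : (s : ℤ) ≠ 0 := by
      intro h
      have : s = 0 := by exact_mod_cast h
      subst this; simp [Nat.gcd_zero_right] at hgcd; omega
    have heqZ : ((a : ℤ) - α) * m = ((t : ℤ) - b) * s := by
      have h0 : (α : ℤ) * m + t * s = a * m + b * s := by exact_mod_cast heq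
      linarith [h0]
    have hcop : IsCoprime (s : ℤ) (m : ℤ) := by
      rw [Int.isCoprime_iff_gcd_eq_one]
      simpa [Int.gcd, Nat.gcd_comm] using hgcd
    have hdvd : (s : ℤ) ∣ ((a : ℤ) - α) :=
      hcop.dvd_of_dvd_mul_right ⟨(t : ℤ) - b, by rw [heqZ]; ring⟩
    obtain ⟨δ, hδ⟩ := hdvd
    have htb : (t : ℤ) - b = δ * m := by
      have h2 : (s : ℤ) * ((t : ℤ) - b) = s * (δ * m) := by linear_combination (m : ℤ) * hδ - heqZ
      exact mul_left_cancel₀ hsne h2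
    set q : ℕ := t / m with hq
    set r : ℕ := t % m with hr
    have hD1 : q * m + r = t := by rw [hq, hr, Nat.mul_comm]; exact Nat.div_add_mod t m
    have hD2 : r < m := Nat.mod_lt _ (by omega)
    have hE : δ ≤ (q : ℤ) := by
      by_contra hcon
      push_neg at hcon
      have h3 : ((q : ℤ) + 1) * m ≤ δ * m := by
        apply mul_le_mul_of_nonneg_right _ (by positivity)
        omega
      have h4 : (q : ℤ) * m + r = t := by exact_mod_cast hD1
      have h5 : (0 : ℤ) ≤ b := by positivity
      have h6 : (r : ℤ) < m := by exact_mod_cast hD2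
      nlinarith [htb]
    have goal : (r : ℤ) ≤ k * (α + q * s) := by
      have h4 : (q : ℤ) * m + r = t := by exact_mod_cast hD1
      have hbZ : (b : ℤ) ≤ k * a := by exact_mod_cast hb
      have haZ : (a : ℤ) = α + s * δ := by linarith [hδ]
      nlinarith [mul_nonneg (sub_nonneg.2 hE) (by positivity : (0:ℤ) ≤ (k:ℤ) * s + m)]
    exact_mod_cast goal
  · intro h
    refine ⟨α + t / m * s, t % m, h, ?_⟩
    have h1 : t / m * m + t % m = t := by rw [Nat.mul_comm]; exact Nat.div_add_mod t m
    calc α * m + t * s = α * m + (t / m * m + t % m) * s := by rw [h1]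
      _ = (α + t / m * s) * m + t % m * s := by ring

lemma leamer_mem (Γ : AddSubmonoid ℕ) (s x n : ℕ) (hn : 1 ≤ n) :
    (x, n) ∈ Leamer Γ s ↔ ∀ j ≤ n, x + j * s ∈ Γ := by
  simp only [Leamer, Set.mem_setOf_eq, Prod.mk.injEq]
  constructor
  · rintro (⟨h1, h2⟩ | ⟨_, h⟩)
    · omega
    · exact h
  · intro h; exact Or.inr ⟨hn, h⟩

theorem stmt16 (m k s : ℕ) (hk1 : 1 ≤ k) (hkm : k ≤ m - 1) (hgcd : Nat.gcd m s = 1)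
    (α i x : ℕ) (hi : i ≤ m - 1) (hx : x = α * m + i * s) :
    ((∃ h : ℕ, IsGreatest {n : ℕ | 1 ≤ n ∧ (x, n) ∈ Leamer (ArithGamma m k s) s} h) ↔
      (k * α ≤ m - 2 ∧ i + 1 ≤ k * α)) ∧
    (k * α ≤ m - 2 ∧ i + 1 ≤ k * α →
      IsGreatest {n : ℕ | 1 ≤ n ∧ (x, n) ∈ Leamer (ArithGamma m k s) s} (k * α - i)) ∧
    ((∀ n : ℕ, 1 ≤ n → (x, n) ∈ Leamer (ArithGamma m k s) s) ↔ m - 1 ≤ k * α) := by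
  have hm : 2 ≤ m := by omega
  have hmem : ∀ n, 1 ≤ n → ((x, n) ∈ Leamer (ArithGamma m k s) s ↔
      ∀ j ≤ n, (i + j) % m ≤ k * (α + (i + j) / m * s)) := by
    intro n hn
    rw [leamer_mem _ _ _ _ hn]
    constructor
    · intro h j hj
      have h1 := h j hj
      rw [hx] at h1
      have e : α * m + i * s + j * s = α * m + (i + j) * s := by ring
      rw [e, arithGamma_mem_iff m k s hm hgcd] at h1
      exact h1
    · intro h j hj
      have h1 := h j hj
      rw [← arithGamma_mem_iff m k s hm hgcd] at h1
      rw [hx]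
      have e : α * m + (i + j) * s = α * m + i * s + j * s := by ring
      rw [← e]
      exact h1
  have Pall : m - 1 ≤ k * α → ∀ t : ℕ, t % m ≤ k * (α + t / m * s) := by
    intro hka t
    have h1 : t % m < m := Nat.mod_lt _ (by omega)
    have h2 : k * α ≤ k * (α + t / m * s) := Nat.mul_le_mul_left _ (by omega)
    omega
  have Psmall : k * α ≤ m - 2 → ∀ t ≤ k * α, t % m ≤ k * (α + t / m * s) := by
    intro h1 t ht
    have h2 : t < m := by omega
    rw [Nat.mod_eq_of_lt h2, Nat.div_eq_of_lt h2]
    simpa using ht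
  have Pfail : ∀ t, t < m → k * α < t → ¬(t % m ≤ k * (α + t / m * s)) := by
    intro t h2 h3
    rw [Nat.mod_eq_of_lt h2, Nat.div_eq_of_lt h2]
    simp only [Nat.zero_mul, Nat.add_zero]
    omega
  have claim3 : (∀ n, 1 ≤ n → (x, n) ∈ Leamer (ArithGamma m k s) s) ↔ m - 1 ≤ k * α := by
    constructor
    · intro h
      by_contra hcon
      push_neg at hcon
      have hka : k * α ≤ m - 2 := by omega
      by_cases hik : i ≤ k * α
      · have h1 := (hmem (k * α + 1 - i) (by omega)).1 (h _ (by omega)) (k * α + 1 - i) le_rfl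
        rw [show i + (k * α + 1 - i) = k * α + 1 by omega] at h1
        exact Pfail (k * α + 1) (by omega) (by omega) h1
      · have h1 := (hmem 1 le_rfl).1 (h 1 le_rfl) 0 (by omega)
        rw [show i + 0 = i by omega] at h1
        exact Pfail i (by omega) (by omega) h1
    · intro hka n hn
      exact (hmem n hn).2 (fun j _ => Pall hka (i + j))
  have claim2 : k * α ≤ m - 2 ∧ i + 1 ≤ k * α →
      IsGreatest {n : ℕ | 1 ≤ n ∧ (x, n) ∈ Leamer (ArithGamma m k s) s} (k * α - i) := by
    rintro ⟨h1, h2⟩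
    constructor
    · refine ⟨by omega, (hmem _ (by omega)).2 ?_⟩
      intro j hj
      exact Psmall h1 (i + j) (by omega)
    · rintro n ⟨hn1, hn2⟩
      by_contra hcon
      push_neg at hcon
      have h3 := (hmem n hn1).1 hn2 (k * α + 1 - i) (by omega)
      rw [show i + (k * α + 1 - i) = k * α + 1 by omega] at h3
      exact Pfail (k * α + 1) (by omega) (by omega) h3
  have claim1 : (∃ h : ℕ, IsGreatest {n : ℕ | 1 ≤ n ∧ (x, n) ∈ Leamer (ArithGamma m k s) s} h) ↔
      (k * α ≤ m - 2 ∧ i + 1 ≤ k * α) := by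
    constructor
    · rintro ⟨h, ⟨⟨hh1, hh2⟩, hub⟩⟩
      have hka : k * α ≤ m - 2 := by
        by_contra hcon
        push_neg at hcon
        have h4 : h + 1 ≤ h := hub ⟨by omega, claim3.2 (by omega) (h + 1) (by omega)⟩
        omega
      have hP0 := (hmem h hh1).1 hh2 0 (by omega)
      have hP1 := (hmem h hh1).1 hh2 1 hh1
      rw [show i + 0 = i from by omega] at hP0
      have hilt : i < m := by omega
      rw [Nat.mod_eq_of_lt hilt, Nat.div_eq_of_lt hilt] at hP0
      simp only [Nat.zero_mul, Nat.add_zero] at hP0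
      have hilt1 : i + 1 < m := by omega
      rw [Nat.mod_eq_of_lt hilt1, Nat.div_eq_of_lt hilt1] at hP1
      simp only [Nat.zero_mul, Nat.add_zero] at hP1
      exact ⟨hka, hP1⟩
    · intro h
      exact ⟨_, claim2 h⟩
  exact ⟨claim1, claim2, claim3⟩
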